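/- The function f(x) = (3/(2√(2π))) · exp(-x²/2) · (1 - erf(x/√2)²) is a probability density: it is nonnegative and ∫_ℝ f(x) dx = 1. -/

import Mathlib

open Real MeasureTheory

noncomputable def erf (x : ℝ) : ℝ := 2 / Real.sqrt π * ∫ s in (0:ℝ)..x, Real.exp (-s^2)

noncomputable def f (x : ℝ) : ℝ :=
  (3 / (2 * Real.sqrt (2*π))) * Real.exp (-x^2/2) * (1 - erf (x / Real.sqrt 2)^2)

noncomputable def Ig (x : ℝ) : ℝ := ∫ s in (0:ℝ)..x, Real.exp (-s^2)

lemma cont_gauss : Continuous fun s : ℝ => Real.exp (-s^2) := by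
  continuity

lemma gauss_integrableOn_Ioi : IntegrableOn (fun s : ℝ => Real.exp (-s^2)) (Set.Ioi 0) := by
  have := (integrable_exp_neg_mul_sq (b := 1) one_pos)
  simpa using this.integrableOn

lemma integral_gauss_Ioi : ∫ s in Set.Ioi (0:ℝ), Real.exp (-s^2) = Real.sqrt π / 2 := by
  have := integral_gaussian_Ioi 1
  simpa using this

lemma hasDerivAt_Ig (x : ℝ) : HasDerivAt Ig (Real.exp (-x^2)) x := by
  exact intervalIntegral.integral_hasDerivAt_right
    (cont_gauss.intervalIntegrable _ _)
    (cont_gauss.stronglyMeasurableAtFilter _ _) cont_gauss.continuousAt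

lemma Ig_neg (x : ℝ) : Ig (-x) = - Ig x := by
  have h := intervalIntegral.integral_comp_neg (a := x) (b := (0:ℝ))
    (fun s => Real.exp (-s^2))
  simp only [neg_sq, neg_zero] at h
  rw [Ig, Ig, ← h, intervalIntegral.integral_symm]

lemma Ig_nonneg_le {x : ℝ} (hx : 0 ≤ x) : 0 ≤ Ig x ∧ Ig x ≤ Real.sqrt π / 2 := by
  have hIoc : Ig x = ∫ s in Set.Ioc (0:ℝ) x, Real.exp (-s^2) := by
    rw [Ig, intervalIntegral.integral_of_le hx]
  constructor
  · rw [hIoc]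
    positivity
  · rw [hIoc, ← integral_gauss_Ioi]
    apply setIntegral_mono_set gauss_integrableOn_Ioi
    · filter_upwards with s using (Real.exp_pos _).le
    · exact (Set.Ioc_subset_Ioi_self).eventuallyLE

lemma abs_Ig_le (x : ℝ) : |Ig x| ≤ Real.sqrt π / 2 := by
  rcases le_or_gt 0 x with hx | hx
  · rw [abs_of_nonneg (Ig_nonneg_le hx).1]; exact (Ig_nonneg_le hx).2
  · have h := Ig_nonneg_le (x := -x) (by linarith)
    rw [Ig_neg] at h
    rw [abs_of_nonpos (by linarith [h.1])]
    linarith [h.2]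

lemma sqrt_pi_pos : 0 < Real.sqrt π := Real.sqrt_pos.mpr Real.pi_pos

lemma abs_erf_le (x : ℝ) : |erf x| ≤ 1 := by
  have h : erf x = 2 / Real.sqrt π * Ig x := rfl
  rw [h, abs_mul, abs_of_nonneg (by positivity : (0:ℝ) ≤ 2 / Real.sqrt π)]
  have := abs_Ig_le x
  rw [div_mul_eq_mul_div, div_le_one sqrt_pi_pos]
  nlinarith [sqrt_pi_pos]

lemma hasDerivAt_erf (x : ℝ) :
    HasDerivAt erf (2 / Real.sqrt π * Real.exp (-x^2)) x :=
  (hasDerivAt_Ig x).const_mul _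

lemma tendsto_Ig_atTop : Filter.Tendsto Ig Filter.atTop (nhds (Real.sqrt π / 2)) := by
  rw [← integral_gauss_Ioi]
  exact intervalIntegral_tendsto_integral_Ioi 0 gauss_integrableOn_Ioi Filter.tendsto_id

lemma tendsto_Ig_atBot : Filter.Tendsto Ig Filter.atBot (nhds (-(Real.sqrt π / 2))) := by
  have : Ig = fun x => - Ig (-x) := by funext x; rw [Ig_neg, neg_neg]
  rw [this]
  exact (tendsto_Ig_atTop.comp Filter.tendsto_neg_atBot_atTop).neg

noncomputable def g (x : ℝ) : ℝ := erf (x / Real.sqrt 2)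

lemma sqrt2_pos : (0:ℝ) < Real.sqrt 2 := Real.sqrt_pos.mpr (by norm_num)

lemma hasDerivAt_g (x : ℝ) :
    HasDerivAt g (2 / Real.sqrt π * Real.exp (-x^2/2) / Real.sqrt 2) x := by
  have h1 : HasDerivAt (fun x : ℝ => x / Real.sqrt 2) (1 / Real.sqrt 2) x := by
    simpa using (hasDerivAt_id x).div_const (Real.sqrt 2)
  have h2 := (hasDerivAt_erf (x / Real.sqrt 2)).comp x h1
  have hx : -(x / Real.sqrt 2)^2 = -x^2/2 := by
    rw [div_pow, Real.sq_sqrt (by norm_num : (2:ℝ) ≥ 0)]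
    ring
  rw [hx] at h2
  exact h2.congr_deriv (by ring)

noncomputable def F (x : ℝ) : ℝ := (3/4) * (g x - g x ^ 3 / 3)

lemma f_eq (x : ℝ) : f x = (3 / (2 * Real.sqrt (2*π))) * Real.exp (-x^2/2) * (1 - g x ^2) := rfl

lemma sqrt_two_pi : Real.sqrt (2*π) = Real.sqrt 2 * Real.sqrt π :=
  Real.sqrt_mul (by norm_num) _

lemma hasDerivAt_F (x : ℝ) : HasDerivAt F (f x) x := by
  have hg := hasDerivAt_g x
  have h : HasDerivAt F ((3/4) * ((1 - g x ^ 2) *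
      (2 / Real.sqrt π * Real.exp (-x^2/2) / Real.sqrt 2))) x := by
    have := ((hg.sub ((hg.pow 3).div_const 3)).const_mul (3/4 : ℝ))
    exact this.congr_deriv (by ring)
  convert h using 1
  rw [f_eq, sqrt_two_pi]
  have h2 := sqrt2_pos.ne'
  have hp := sqrt_pi_pos.ne'
  field_simp
  ring

lemma g_sq_le_one (x : ℝ) : g x ^ 2 ≤ 1 := by
  have hg : |g x| ≤ 1 := abs_erf_le (x / Real.sqrt 2)
  have h2 : g x ^ 2 = |g x| ^ 2 := (sq_abs _).symm
  rw [h2]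
  nlinarith [abs_nonneg (g x)]

lemma f_nonneg (x : ℝ) : 0 ≤ f x := by
  rw [f_eq]
  have h1 : (0:ℝ) ≤ 3 / (2 * Real.sqrt (2*π)) := by positivity
  have h2 : (0:ℝ) < Real.exp (-x^2/2) := Real.exp_pos _
  have h3 := g_sq_le_one x
  exact mul_nonneg (mul_nonneg h1 h2.le) (by linarith)

lemma continuous_g : Continuous g :=
  continuous_iff_continuousAt.mpr fun x => (hasDerivAt_g x).continuousAt

lemma continuous_f : Continuous f := by
  have h : f = fun x => (3 / (2 * Real.sqrt (2*π))) * Real.exp (-x^2/2) * (1 - g x ^2) := rfl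
  rw [h]
  exact (continuous_const.mul (Real.continuous_exp.comp (by fun_prop))).mul
    (continuous_const.sub (continuous_g.pow 2))

lemma integrable_f : Integrable f := by
  have hcont : Continuous f := continuous_f
  have hbound : Integrable (fun x : ℝ => (3 / (2 * Real.sqrt (2*π))) * Real.exp (-(1/2) * x^2)) :=
    (integrable_exp_neg_mul_sq (by norm_num : (0:ℝ) < 1/2)).const_mul _
  apply hbound.mono' hcont.aestronglyMeasurable
  filter_upwards with x
  rw [Real.norm_eq_abs, abs_of_nonneg (f_nonneg x), f_eq]
  have h3 := g_sq_le_one x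
  have h2 : (0:ℝ) < Real.exp (-x^2/2) := Real.exp_pos _
  have h1 : (0:ℝ) ≤ 3 / (2 * Real.sqrt (2*π)) := by positivity
  have hx : -(1/2 : ℝ) * x^2 = -x^2/2 := by ring
  rw [hx]
  exact mul_le_of_le_one_right (mul_nonneg h1 h2.le) (by nlinarith [sq_nonneg (g x)])

lemma tendsto_g_atTop : Filter.Tendsto g Filter.atTop (nhds 1) := by
  have h : Filter.Tendsto (fun x : ℝ => x / Real.sqrt 2) Filter.atTop Filter.atTop :=
    Filter.tendsto_id.atTop_div_const sqrt2_pos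
  have h2 : Filter.Tendsto (fun x : ℝ => 2 / Real.sqrt π * Ig (x / Real.sqrt 2))
      Filter.atTop (nhds (2 / Real.sqrt π * (Real.sqrt π / 2))) :=
    ((tendsto_Ig_atTop.comp h).const_mul _)
  have he : (2 / Real.sqrt π * (Real.sqrt π / 2)) = 1 := by
    field_simp
  rw [he] at h2
  exact h2

lemma tendsto_g_atBot : Filter.Tendsto g Filter.atBot (nhds (-1)) := by
  have h : Filter.Tendsto (fun x : ℝ => x / Real.sqrt 2) Filter.atBot Filter.atBot :=
    Filter.tendsto_id.atBot_div_const sqrt2_pos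
  have h2 : Filter.Tendsto (fun x : ℝ => 2 / Real.sqrt π * Ig (x / Real.sqrt 2))
      Filter.atBot (nhds (2 / Real.sqrt π * (-(Real.sqrt π / 2)))) :=
    ((tendsto_Ig_atBot.comp h).const_mul _)
  have he : (2 / Real.sqrt π * (-(Real.sqrt π / 2))) = -1 := by
    field_simp
  rw [he] at h2
  exact h2

theorem f_is_density : (∀ x, 0 ≤ f x) ∧ ∫ x : ℝ, f x = 1 := by
  refine ⟨f_nonneg, ?_⟩
  have hFtop : Filter.Tendsto F Filter.atTop
      (nhds ((3/4 : ℝ) * ((1:ℝ) - (1:ℝ)^3/3))) :=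
    Filter.Tendsto.const_mul _ (tendsto_g_atTop.sub ((tendsto_g_atTop.pow 3).div_const 3))
  have hFbot : Filter.Tendsto F Filter.atBot
      (nhds ((3/4 : ℝ) * ((-1:ℝ) - (-1:ℝ)^3/3))) :=
    Filter.Tendsto.const_mul _ (tendsto_g_atBot.sub ((tendsto_g_atBot.pow 3).div_const 3))
  norm_num at hFtop hFbot
  have h := MeasureTheory.integral_of_hasDerivAt_of_tendsto hasDerivAt_F integrable_f hFbot hFtop
  rw [h]
  norm_num
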